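/- Let r, P_H, P_T ∈ ℂ^k with |r_i| = 1 for all i and P_H ∘ r = P_T. Let R_H, R_T ≥ 0 and define C_H = {x : ‖x - P_H‖ ≤ R_H} and C_T = {x : ‖x - P_T‖ ≤ R_T}. Suppose h₁ ∈ C_H, t ∈ C_T, and h₂ satisfies ‖h₂ - P_H‖ > R_H + 2R_T. Then for f(h, t) = -‖h ∘ r - t‖, we have f(h₁, t) > f(h₂, t). -/

import Mathlib

/-- Hadamard (coordinatewise) product on `ℂ^k`. -/
noncomputable def hadamard {k : ℕ} (a b : EuclideanSpace ℂ (Fin k)) :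
    EuclideanSpace ℂ (Fin k) := WithLp.toLp 2 (fun i => a i * b i)

lemma hadamard_sub {k : ℕ} (a b r : EuclideanSpace ℂ (Fin k)) :
    hadamard a r - hadamard b r = hadamard (a - b) r := by
  ext i
  simp [hadamard, sub_mul]

lemma norm_hadamard {k : ℕ} (a r : EuclideanSpace ℂ (Fin k))
    (hr : ∀ i, ‖r i‖ = 1) : ‖hadamard a r‖ = ‖a‖ := by
  rw [EuclideanSpace.norm_eq, EuclideanSpace.norm_eq]
  congr 1
  apply Finset.sum_congr rfl
  intro i _
  show ‖a i * r i‖ ^ 2 = ‖a i‖ ^ 2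
  rw [norm_mul]
  simp [hr i]

theorem head_in_area_scores_higher {k : ℕ}
    (r PH PT h₁ h₂ t : EuclideanSpace ℂ (Fin k))
    (hr : ∀ i, ‖r i‖ = 1) (hP : hadamard PH r = PT)
    (RH RT : ℝ) (hRH : 0 ≤ RH) (hRT : 0 ≤ RT)
    (hh₁ : ‖h₁ - PH‖ ≤ RH) (ht : ‖t - PT‖ ≤ RT)
    (hh₂ : ‖h₂ - PH‖ > RH + 2 * RT) :
    -‖hadamard h₁ r - t‖ > -‖hadamard h₂ r - t‖ := by
  have key : ∀ x : EuclideanSpace ℂ (Fin k), ‖hadamard x r - PT‖ = ‖x - PH‖ := by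
    intro x
    rw [← hP, hadamard_sub, norm_hadamard _ _ hr]
  have h1 : ‖hadamard h₁ r - t‖ ≤ RH + RT := by
    calc ‖hadamard h₁ r - t‖
        = ‖(hadamard h₁ r - PT) + (PT - t)‖ := by congr 1; abel
      _ ≤ ‖hadamard h₁ r - PT‖ + ‖PT - t‖ := norm_add_le _ _
      _ = ‖h₁ - PH‖ + ‖t - PT‖ := by rw [key h₁, norm_sub_rev PT t]
      _ ≤ RH + RT := add_le_add hh₁ ht
  have h2 : RH + RT < ‖hadamard h₂ r - t‖ := by
    have hle := norm_sub_norm_le (hadamard h₂ r - PT) (t - PT)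
    have heq : (hadamard h₂ r - PT) - (t - PT) = hadamard h₂ r - t := by abel
    rw [heq, key] at hle
    linarith
  linarith
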